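/- For every κ ∈ (4,8) and every integer N ≥ 1 there exists a finite constant C = C(N,κ) > 0 such that for all real x₁ < x₂ < ⋯ < x_{2N}, the iterated integral F(x) = ∫_{x₁}^{x₂} du₁ ∫_{x₃}^{x₄} du₂ ⋯ ∫_{x_{2N−1}}^{x_{2N}} du_N ∏_{1≤i<j≤2N}(x_j−x_i)^{2/κ} · ∏_{1≤r<s≤N}|u_s−u_r|^{8/κ} · ∏_{t=1}^{N}∏_{j=1}^{2N}|u_t−x_j|^{−4/κ} (where u_r is integrated over the interval (x_{2r−1}, x_{2r})) is finite and satisfies 0 < F(x) ≤ C · ∏_{1≤i<j≤2N} |x_j−x_i|^{μ_{ij}}, where μ_{ij} = 10/κ if |x_j−x_i| ≥ 1 and μ_{ij} = −6/κ if |x_j−x_i| < 1. -/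

import Mathlib

open MeasureTheory intervalIntegral

/-- The Coulomb gas integrand for the fully unnested link pattern:
`∏_{i<j}(x_j−x_i)^{2/κ} · ∏_{r<s}|u_s−u_r|^{8/κ} · ∏_{t,j}|u_t−x_j|^{−4/κ}`. -/
noncomputable def cgIntegrand (κ : ℝ) (N : ℕ) (x : Fin (2*N) → ℝ) (u : Fin N → ℝ) : ℝ :=
  (∏ i : Fin (2*N), ∏ j ∈ Finset.Ioi i, (x j - x i) ^ (2/κ)) *
  (∏ r : Fin N, ∏ s ∈ Finset.Ioi r, |u s - u r| ^ (8/κ)) *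
  (∏ t : Fin N, ∏ j : Fin (2*N), |u t - x j| ^ (-(4/κ)))

/-- The integration region: `u_r ∈ (x_{2r−1}, x_{2r})` (1-based), i.e.
`u r ∈ (x (2r), x (2r+1))` in 0-based indexing. -/
def cgBox (N : ℕ) (x : Fin (2*N) → ℝ) : Set (Fin N → ℝ) :=
  {u | ∀ r : Fin N,
    u r ∈ Set.Ioo (x ⟨2*r.1, by have := r.isLt; omega⟩)
                  (x ⟨2*r.1 + 1, by have := r.isLt; omega⟩)}

namespace CGaux

lemma rpow_ite (x c : ℝ) (P : Prop) [Decidable P] :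
    x ^ (if P then c else 0) = if P then x ^ c else 1 := by
  split_ifs with h
  · rfl
  · exact Real.rpow_zero x

def idxA (N : ℕ) (t : Fin N) : Fin (2*N) := ⟨2*t.1, by have := t.isLt; omega⟩
def idxB (N : ℕ) (t : Fin N) : Fin (2*N) := ⟨2*t.1+1, by have := t.isLt; omega⟩

lemma pair_prod_ite (p : Fin (2*N) → Fin (2*N) → Prop) [∀ i j, Decidable (p i j)]
    (F : Fin (2*N) → Fin (2*N) → ℝ) :
    (∏ i : Fin (2*N), ∏ j ∈ Finset.Ioi i, (if p i j then F i j else 1))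
      = ∏ q ∈ (Finset.univ.sigma fun i : Fin (2*N) => Finset.Ioi i).filter
          (fun q => p q.1 q.2), F q.1 q.2 := by
  rw [Finset.prod_sigma' Finset.univ (fun i => Finset.Ioi i)
    (fun i j => if p i j then F i j else 1), ← Finset.prod_filter]

lemma reindex_adj (F : Fin (2*N) → Fin (2*N) → ℝ) :
    (∏ i : Fin (2*N), ∏ j ∈ Finset.Ioi i,
      (if (j.1 = i.1 + 1 ∧ i.1 % 2 = 0) then F i j else 1))
      = ∏ t : Fin N, F (idxA N t) (idxB N t) := by
  rw [pair_prod_ite]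
  refine Finset.prod_bij'
    (fun (q : (_ : Fin (2*N)) × Fin (2*N)) (_ : q ∈ _) =>
      (⟨q.1.1/2, by have := q.1.isLt; omega⟩ : Fin N))
    (fun (t : Fin N) (_ : t ∈ Finset.univ) =>
      (⟨idxA N t, idxB N t⟩ : (_ : Fin (2*N)) × Fin (2*N)))
    (fun q hq => Finset.mem_univ _) ?_ ?_ ?_ ?_
  · intro t ht
    simp only [Finset.mem_filter, Finset.mem_sigma, Finset.mem_univ, Finset.mem_Ioi, true_and]
    exact ⟨by simp [idxA, idxB, Fin.lt_def], by simp [idxA, idxB], by simp [idxA]⟩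
  · intro q hq
    simp only [Finset.mem_filter, Finset.mem_sigma, Finset.mem_univ, Finset.mem_Ioi,
      true_and] at hq
    obtain ⟨hlt, hj, hi⟩ := hq
    rcases q with ⟨qi, qj⟩
    simp only at hj hi
    refine Sigma.ext (Fin.ext ?_) (heq_of_eq (Fin.ext ?_)) <;>
      simp only [idxA, idxB] <;> omega
  · intro t ht
    apply Fin.ext
    simp [idxA]
  · intro q hq
    simp only [Finset.mem_filter, Finset.mem_sigma, Finset.mem_univ, Finset.mem_Ioi,
      true_and] at hq
    obtain ⟨hlt, hj, hi⟩ := hq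
    rcases q with ⟨qi, qj⟩
    simp only at hj hi
    refine congrArg₂ F (Fin.ext ?_) (Fin.ext ?_) <;>
      simp only [idxA, idxB] <;> omega


lemma reindex_cross (F : Fin (2*N) → Fin (2*N) → ℝ) :
    (∏ i : Fin (2*N), ∏ j ∈ Finset.Ioi i,
      (if (i.1 % 2 = 0 ∧ j.1 % 2 = 1 ∧ i.1 + 1 < j.1) then F i j else 1))
      = ∏ r : Fin N, ∏ s ∈ Finset.Ioi r, F (idxA N r) (idxB N s) := by
  rw [pair_prod_ite, Finset.prod_sigma' Finset.univ (fun r => Finset.Ioi r)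
    (fun r s => F (idxA N r) (idxB N s))]
  refine Finset.prod_bij'
    (fun (q : (_ : Fin (2*N)) × Fin (2*N)) (_ : q ∈ _) =>
      ((⟨⟨q.1.1/2, by have := q.1.isLt; omega⟩, ⟨q.2.1/2, by have := q.2.isLt; omega⟩⟩ :
        (_ : Fin N) × Fin N)))
    (fun (p : (_ : Fin N) × Fin N) (_ : p ∈ _) =>
      ((⟨idxA N p.1, idxB N p.2⟩ : (_ : Fin (2*N)) × Fin (2*N))))
    ?_ ?_ ?_ ?_ ?_
  · intro q hq
    simp only [Finset.mem_filter, Finset.mem_sigma, Finset.mem_univ, Finset.mem_Ioi,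
      true_and, Fin.lt_def] at hq ⊢
    omega
  · intro p hp
    simp only [Finset.mem_sigma, Finset.mem_univ, Finset.mem_Ioi, true_and, Fin.lt_def] at hp
    simp only [Finset.mem_filter, Finset.mem_sigma, Finset.mem_univ, Finset.mem_Ioi,
      true_and, Fin.lt_def, idxA, idxB]
    omega
  · intro q hq
    simp only [Finset.mem_filter, Finset.mem_sigma, Finset.mem_univ, Finset.mem_Ioi,
      true_and, Fin.lt_def] at hq
    rcases q with ⟨qi, qj⟩
    simp only at hq
    refine Sigma.ext (Fin.ext ?_) (heq_of_eq (Fin.ext ?_)) <;>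
      simp only [idxA, idxB] <;> omega
  · intro p hp
    rcases p with ⟨pr, ps⟩
    refine Sigma.ext (Fin.ext ?_) (heq_of_eq (Fin.ext ?_)) <;>
      simp only [idxA, idxB] <;> omega
  · intro q hq
    simp only [Finset.mem_filter, Finset.mem_sigma, Finset.mem_univ, Finset.mem_Ioi,
      true_and, Fin.lt_def] at hq
    rcases q with ⟨qi, qj⟩
    simp only at hq
    refine congrArg₂ F (Fin.ext ?_) (Fin.ext ?_) <;>
      simp only [idxA, idxB] <;> omega

lemma reindex_even (F : Fin (2*N) → Fin (2*N) → ℝ) :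
    (∏ i : Fin (2*N), ∏ j ∈ Finset.Ioi i, (if j.1 % 2 = 0 then F i j else 1))
      = ∏ t : Fin N, ∏ i ∈ Finset.Iio (idxA N t), F i (idxA N t) := by
  rw [pair_prod_ite, Finset.prod_sigma' Finset.univ (fun t => Finset.Iio (idxA N t))
    (fun t i => F i (idxA N t))]
  refine Finset.prod_bij'
    (fun (q : (_ : Fin (2*N)) × Fin (2*N)) (_ : q ∈ _) =>
      ((⟨⟨q.2.1/2, by have := q.2.isLt; omega⟩, q.1⟩ : (_ : Fin N) × Fin (2*N))))
    (fun (p : (_ : Fin N) × Fin (2*N)) (_ : p ∈ _) =>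
      ((⟨p.2, idxA N p.1⟩ : (_ : Fin (2*N)) × Fin (2*N))))
    ?_ ?_ ?_ ?_ ?_
  · intro q hq
    simp only [Finset.mem_filter, Finset.mem_sigma, Finset.mem_univ, Finset.mem_Ioi,
      Finset.mem_Iio, true_and, Fin.lt_def, idxA] at hq ⊢
    omega
  · intro p hp
    simp only [Finset.mem_sigma, Finset.mem_univ, Finset.mem_Iio, true_and, Fin.lt_def,
      idxA] at hp
    simp only [Finset.mem_filter, Finset.mem_sigma, Finset.mem_univ, Finset.mem_Ioi,
      true_and, Fin.lt_def, idxA]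
    omega
  · intro q hq
    simp only [Finset.mem_filter, Finset.mem_sigma, Finset.mem_univ, Finset.mem_Ioi,
      true_and, Fin.lt_def] at hq
    rcases q with ⟨qi, qj⟩
    simp only at hq
    refine Sigma.ext (Fin.ext ?_) (heq_of_eq (Fin.ext ?_)) <;>
      simp only [idxA] <;> omega
  · intro p hp
    simp only [Finset.mem_sigma, Finset.mem_univ, Finset.mem_Iio, true_and, Fin.lt_def,
      idxA] at hp
    rcases p with ⟨pt, pi⟩
    simp only at hp
    refine Sigma.ext (Fin.ext ?_) (heq_of_eq (Fin.ext ?_)) <;>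
      simp only [idxA] <;> omega
  · intro q hq
    simp only [Finset.mem_filter, Finset.mem_sigma, Finset.mem_univ, Finset.mem_Ioi,
      true_and, Fin.lt_def] at hq
    rcases q with ⟨qi, qj⟩
    simp only at hq
    refine congrArg₂ F rfl (Fin.ext ?_)
    simp only [idxA]; omega

lemma reindex_odd (F : Fin (2*N) → Fin (2*N) → ℝ) :
    (∏ i : Fin (2*N), ∏ j ∈ Finset.Ioi i, (if i.1 % 2 = 1 then F i j else 1))
      = ∏ t : Fin N, ∏ j ∈ Finset.Ioi (idxB N t), F (idxB N t) j := by
  rw [pair_prod_ite, Finset.prod_sigma' Finset.univ (fun t => Finset.Ioi (idxB N t))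
    (fun t j => F (idxB N t) j)]
  refine Finset.prod_bij'
    (fun (q : (_ : Fin (2*N)) × Fin (2*N)) (_ : q ∈ _) =>
      ((⟨⟨q.1.1/2, by have := q.1.isLt; omega⟩, q.2⟩ : (_ : Fin N) × Fin (2*N))))
    (fun (p : (_ : Fin N) × Fin (2*N)) (_ : p ∈ _) =>
      ((⟨idxB N p.1, p.2⟩ : (_ : Fin (2*N)) × Fin (2*N))))
    ?_ ?_ ?_ ?_ ?_
  · intro q hq
    simp only [Finset.mem_filter, Finset.mem_sigma, Finset.mem_univ, Finset.mem_Ioi,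
      true_and, Fin.lt_def, idxB] at hq ⊢
    omega
  · intro p hp
    simp only [Finset.mem_sigma, Finset.mem_univ, Finset.mem_Ioi, true_and, Fin.lt_def,
      idxB] at hp
    simp only [Finset.mem_filter, Finset.mem_sigma, Finset.mem_univ, Finset.mem_Ioi,
      true_and, Fin.lt_def, idxB]
    omega
  · intro q hq
    simp only [Finset.mem_filter, Finset.mem_sigma, Finset.mem_univ, Finset.mem_Ioi,
      true_and, Fin.lt_def] at hq
    rcases q with ⟨qi, qj⟩
    simp only at hq
    refine Sigma.ext (Fin.ext ?_) (heq_of_eq ?_) <;>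
      simp only [idxB] <;> omega
  · intro p hp
    simp only [Finset.mem_sigma, Finset.mem_univ, Finset.mem_Ioi, true_and, Fin.lt_def,
      idxB] at hp
    rcases p with ⟨pt, pj⟩
    simp only at hp
    refine Sigma.ext (Fin.ext ?_) (heq_of_eq ?_) <;>
      simp only [idxB] <;> omega
  · intro q hq
    simp only [Finset.mem_filter, Finset.mem_sigma, Finset.mem_univ, Finset.mem_Ioi,
      true_and, Fin.lt_def] at hq
    rcases q with ⟨qi, qj⟩
    simp only at hq
    refine congrArg₂ F (Fin.ext ?_) rfl
    simp only [idxB]; omega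

noncomputable def hfun (a b cc : ℝ) : ℝ → ℝ := fun v =>
  ((b - a)/2) ^ (-cc) * ((v - a) ^ (-cc) + (b - v) ^ (-cc))

lemma oneD_left_int {a b cc : ℝ} (hab : a < b) (hc1 : cc < 1) :
    IntegrableOn (fun v : ℝ => (v - a) ^ (-cc)) (Set.Ioo a b) volume := by
  have h : IntervalIntegrable (fun x : ℝ => x ^ (-cc)) volume (a - a) (b - a) :=
    intervalIntegrable_rpow' (by linarith)
  have h2 := h.comp_sub_right a
  have h3 : IntervalIntegrable (fun v : ℝ => (v - a) ^ (-cc)) volume a b := by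
    have e1 : a - a + a = a := by ring
    have e2 : b - a + a = b := by ring
    rwa [e1, e2] at h2
  exact (intervalIntegrable_iff_integrableOn_Ioo_of_le hab.le).mp h3

lemma oneD_left_val {a b cc : ℝ} (hab : a < b) (hc1 : cc < 1) :
    ∫ v in Set.Ioo a b, (v - a) ^ (-cc) = (b - a) ^ (1 - cc) / (1 - cc) := by
  rw [← MeasureTheory.integral_Ioc_eq_integral_Ioo,
    ← intervalIntegral.integral_of_le hab.le]
  rw [show (∫ x in a..b, (x - a) ^ (-cc))
      = ∫ x in (a-a)..(b-a), x ^ (-cc) from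
    intervalIntegral.integral_comp_sub_right (fun x => x ^ (-cc)) a]
  rw [integral_rpow (Or.inl (by linarith))]
  rw [sub_self, Real.zero_rpow (by linarith)]
  rw [show -cc + 1 = 1 - cc by ring]
  ring

lemma oneD_right_int {a b cc : ℝ} (hab : a < b) (hc1 : cc < 1) :
    IntegrableOn (fun v : ℝ => (b - v) ^ (-cc)) (Set.Ioo a b) volume := by
  have h : IntervalIntegrable (fun x : ℝ => x ^ (-cc)) volume (b - b) (b - a) :=
    intervalIntegrable_rpow' (by linarith)
  have h2 := h.comp_sub_left b
  have h3 : IntervalIntegrable (fun v : ℝ => (b - v) ^ (-cc)) volume b a := by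
    have e1 : b - (b - b) = b := by ring
    have e2 : b - (b - a) = a := by ring
    rwa [e1, e2] at h2
  exact (intervalIntegrable_iff_integrableOn_Ioo_of_le hab.le).mp h3.symm

lemma oneD_right_val {a b cc : ℝ} (hab : a < b) (hc1 : cc < 1) :
    ∫ v in Set.Ioo a b, (b - v) ^ (-cc) = (b - a) ^ (1 - cc) / (1 - cc) := by
  rw [← MeasureTheory.integral_Ioc_eq_integral_Ioo,
    ← intervalIntegral.integral_of_le hab.le]
  rw [show (∫ x in a..b, (b - x) ^ (-cc))
      = ∫ x in (b-b)..(b-a), x ^ (-cc) from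
    intervalIntegral.integral_comp_sub_left (fun x => x ^ (-cc)) b]
  rw [integral_rpow (Or.inl (by linarith))]
  rw [sub_self, Real.zero_rpow (by linarith)]
  rw [show -cc + 1 = 1 - cc by ring]
  ring

lemma hfun_integrableOn {a b cc : ℝ} (hab : a < b) (hc1 : cc < 1) :
    IntegrableOn (hfun a b cc) (Set.Ioo a b) volume := by
  unfold hfun
  exact (((oneD_left_int hab hc1).add (oneD_right_int hab hc1)).const_mul _)

lemma hfun_integral {a b cc : ℝ} (hab : a < b) (hc0 : 0 < cc) (hc1 : cc < 1) :
    ∫ v in Set.Ioo a b, hfun a b cc v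
      = (2 ^ cc * 2 / (1 - cc)) * (b - a) ^ (1 - 2*cc) := by
  unfold hfun
  rw [MeasureTheory.integral_const_mul,
    integral_add (oneD_left_int hab hc1) (oneD_right_int hab hc1),
    oneD_left_val hab hc1, oneD_right_val hab hc1]
  have hba : (0:ℝ) < b - a := by linarith
  have h1 : ((b - a)/2) ^ (-cc) = 2 ^ cc * (b - a) ^ (-cc) := by
    rw [Real.div_rpow hba.le (by norm_num : (0:ℝ) ≤ 2),
      Real.rpow_neg (by norm_num : (0:ℝ) ≤ 2), div_eq_mul_inv, inv_inv, mul_comm]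
  have h2 : (b - a) ^ (-cc) * (b - a) ^ (1 - cc) = (b - a) ^ (1 - 2*cc) := by
    rw [← Real.rpow_add hba]; ring_nf
  rw [h1, ← h2]
  ring

lemma measurable_rpow_const' (r : ℝ) : Measurable fun x : ℝ => x ^ r := by
  apply measurable_of_continuousOn_compl_singleton (0:ℝ)
  intro z hz
  exact (Real.continuousAt_rpow_const z r (Or.inl hz)).continuousWithinAt

noncomputable def eexp (κ : ℝ) (iv jv : ℕ) : ℝ :=
  2/κ + (if iv % 2 = 0 ∧ jv % 2 = 1 ∧ iv + 1 < jv then 8/κ else 0)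
    + ((if jv % 2 = 0 then -(4/κ) else 0) + (if iv % 2 = 1 then -(4/κ) else 0))

noncomputable def Eexp (κ : ℝ) (iv jv : ℕ) : ℝ :=
  eexp κ iv jv + (if jv = iv + 1 ∧ iv % 2 = 0 then 1 - 2*(4/κ) else 0)

lemma Eexp_bounds {κ : ℝ} (hκ4 : 4 < κ) (hκ8 : κ < 8) {iv jv : ℕ} (hij : iv < jv) :
    -(6/κ) ≤ Eexp κ iv jv ∧ Eexp κ iv jv ≤ 10/κ := by
  have hκ0 : (0:ℝ) < κ := by linarith
  have ht0 : 0 < κ⁻¹ := by positivity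
  have htm : κ * κ⁻¹ = 1 := mul_inv_cancel₀ (ne_of_gt hκ0)
  have ht1 : 1 < 8 * κ⁻¹ := by nlinarith
  have ht2 : 4 * κ⁻¹ < 1 := by nlinarith
  unfold Eexp eexp
  constructor <;>
    (simp only [div_eq_mul_inv]; split_ifs <;> first | (exfalso; omega) | linarith)
lemma hfun_nonneg {a b cc : ℝ} (hab : a < b) (v : ℝ) (hv : v ∈ Set.Ioo a b) :
    0 ≤ hfun a b cc v := by
  have h1 : (0:ℝ) ≤ (b - a)/2 := by linarith [hv.1, hv.2]
  have h2 : (0:ℝ) ≤ v - a := by linarith [hv.1]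
  have h3 : (0:ℝ) ≤ b - v := by linarith [hv.2]
  have := Real.rpow_nonneg h1 (-cc)
  have := Real.rpow_nonneg h2 (-cc)
  have := Real.rpow_nonneg h3 (-cc)
  unfold hfun; positivity

lemma hfun_ge {a b cc : ℝ} (hab : a < b) (hc0 : 0 < cc) {v : ℝ} (hv : v ∈ Set.Ioo a b) :
    (v - a) ^ (-cc) * (b - v) ^ (-cc) ≤ hfun a b cc v := by
  obtain ⟨hva, hvb⟩ := hv
  have hm : (0:ℝ) < (b - a)/2 := by linarith
  have hva' : (0:ℝ) < v - a := by linarith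
  have hvb' : (0:ℝ) < b - v := by linarith
  have hcn : -cc ≤ 0 := by linarith
  unfold hfun
  rcases le_total v ((a+b)/2) with hmid | hmid
  · have hbig : (b - a)/2 ≤ b - v := by linarith
    have h1 : (b - v) ^ (-cc) ≤ ((b - a)/2) ^ (-cc) :=
      Real.rpow_le_rpow_of_nonpos hm hbig hcn
    have h2 : (v - a) ^ (-cc) * (b - v) ^ (-cc) ≤ (v - a) ^ (-cc) * ((b-a)/2) ^ (-cc) :=
      mul_le_mul_of_nonneg_left h1 (Real.rpow_nonneg hva'.le _)
    refine h2.trans ?_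
    have h3 : (0:ℝ) ≤ (b - v) ^ (-cc) := Real.rpow_nonneg hvb'.le _
    have h4 : (0:ℝ) ≤ ((b-a)/2) ^ (-cc) := Real.rpow_nonneg hm.le _
    nlinarith [Real.rpow_nonneg hva'.le (-cc)]
  · have hbig : (b - a)/2 ≤ v - a := by linarith
    have h1 : (v - a) ^ (-cc) ≤ ((b - a)/2) ^ (-cc) :=
      Real.rpow_le_rpow_of_nonpos hm hbig hcn
    have h2 : (v - a) ^ (-cc) * (b - v) ^ (-cc) ≤ ((b-a)/2) ^ (-cc) * (b - v) ^ (-cc) :=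
      mul_le_mul_of_nonneg_right h1 (Real.rpow_nonneg hvb'.le _)
    refine h2.trans ?_
    have h3 : (0:ℝ) ≤ (v - a) ^ (-cc) := Real.rpow_nonneg hva'.le _
    have h4 : (0:ℝ) ≤ ((b-a)/2) ^ (-cc) := Real.rpow_nonneg hm.le _
    nlinarith [Real.rpow_nonneg hvb'.le (-cc)]

lemma pointwise_bound {κ : ℝ} (hκ0 : 0 < κ) {N : ℕ} {x : Fin (2*N) → ℝ}
    (hx : StrictMono x) {u : Fin N → ℝ} (hu : u ∈ cgBox N x) :
    cgIntegrand κ N x u ≤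
      (∏ i : Fin (2*N), ∏ j ∈ Finset.Ioi i, (x j - x i) ^ (eexp κ i.1 j.1)) *
      ∏ t : Fin N, hfun (x (idxA N t)) (x (idxB N t)) (4/κ) (u t) := by
  have hu' : ∀ t, u t ∈ Set.Ioo (x (idxA N t)) (x (idxB N t)) := fun t => hu t
  have hab : ∀ t, x (idxA N t) < x (idxB N t) := fun t =>
    hx (by simp [idxA, idxB, Fin.lt_def])
  have hxij : ∀ i j : Fin (2*N), i < j → 0 < x j - x i :=
    fun i j h => sub_pos.mpr (hx h)
  -- decompose the pair-exponent product
  have hW : (∏ i : Fin (2*N), ∏ j ∈ Finset.Ioi i, (x j - x i) ^ (eexp κ i.1 j.1))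
      = (∏ i : Fin (2*N), ∏ j ∈ Finset.Ioi i, (x j - x i) ^ (2/κ)) *
        ((∏ i : Fin (2*N), ∏ j ∈ Finset.Ioi i,
            (if (i.1 % 2 = 0 ∧ j.1 % 2 = 1 ∧ i.1 + 1 < j.1)
              then (x j - x i) ^ (8/κ) else 1)) *
         ((∏ i : Fin (2*N), ∏ j ∈ Finset.Ioi i,
            (if j.1 % 2 = 0 then (x j - x i) ^ (-(4/κ)) else 1)) *
          (∏ i : Fin (2*N), ∏ j ∈ Finset.Ioi i,
            (if i.1 % 2 = 1 then (x j - x i) ^ (-(4/κ)) else 1)))) := by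
    rw [← Finset.prod_mul_distrib, ← Finset.prod_mul_distrib, ← Finset.prod_mul_distrib]
    refine Finset.prod_congr rfl fun i _ => ?_
    rw [← Finset.prod_mul_distrib, ← Finset.prod_mul_distrib, ← Finset.prod_mul_distrib]
    refine Finset.prod_congr rfl fun j hj => ?_
    have hb := hxij i j (Finset.mem_Ioi.mp hj)
    rw [eexp, Real.rpow_add hb, Real.rpow_add hb, Real.rpow_add hb,
      rpow_ite, rpow_ite, rpow_ite]
    ring
  -- bound for the second factor
  have hQ : (∏ i : Fin (2*N), ∏ j ∈ Finset.Ioi i,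
        (if (i.1 % 2 = 0 ∧ j.1 % 2 = 1 ∧ i.1 + 1 < j.1)
          then (x j - x i) ^ (8/κ) else 1))
      = ∏ r : Fin N, ∏ s ∈ Finset.Ioi r, (x (idxB N s) - x (idxA N r)) ^ (8/κ) :=
    reindex_cross (fun i j => (x j - x i) ^ (8/κ))
  have hT2 : (∏ r : Fin N, ∏ s ∈ Finset.Ioi r, |u s - u r| ^ (8/κ))
      ≤ ∏ r : Fin N, ∏ s ∈ Finset.Ioi r, (x (idxB N s) - x (idxA N r)) ^ (8/κ) := by
    refine Finset.prod_le_prod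
      (fun r _ => Finset.prod_nonneg fun s _ => Real.rpow_nonneg (abs_nonneg _) _)
      (fun r _ => Finset.prod_le_prod
        (fun s _ => Real.rpow_nonneg (abs_nonneg _) _) fun s hs => ?_)
    have hrs : r < s := Finset.mem_Ioi.mp hs
    have h1 := hu' r
    have h2 := hu' s
    have hba : x (idxB N r) ≤ x (idxA N s) := by
      apply hx.monotone
      simp only [idxA, idxB, Fin.le_def]
      omega
    have huru : u r < u s := lt_of_lt_of_le h1.2 (le_trans hba h2.1.le)
    have hle : |u s - u r| ≤ x (idxB N s) - x (idxA N r) := by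
      rw [abs_of_pos (sub_pos.mpr huru)]
      have := h1.1
      have := h2.2
      linarith
    exact Real.rpow_le_rpow (abs_nonneg _) hle (by positivity)
  -- third factor
  set rest : Fin N → Finset (Fin (2*N)) := fun t =>
    (Finset.univ.erase (idxA N t)).erase (idxB N t) with hrest_def
  set δ : (t : Fin N) → Fin (2*N) → ℝ := fun t j =>
    if j.1 < 2*t.1 then x (idxA N t) - x j else x j - x (idxB N t) with hδ_def
  have hdec : ∀ t, (∏ j : Fin (2*N), |u t - x j| ^ (-(4/κ)))
      = ((u t - x (idxA N t)) ^ (-(4/κ)) * (x (idxB N t) - u t) ^ (-(4/κ))) *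
        ∏ j ∈ rest t, |u t - x j| ^ (-(4/κ)) := by
    intro t
    have hBmem : idxB N t ∈ Finset.univ.erase (idxA N t) := by
      refine Finset.mem_erase.mpr ⟨?_, Finset.mem_univ _⟩
      simp [idxA, idxB, Fin.ext_iff]
    rw [← Finset.mul_prod_erase Finset.univ _ (Finset.mem_univ (idxA N t)),
      ← Finset.mul_prod_erase _ _ hBmem]
    have e1 : |u t - x (idxA N t)| = u t - x (idxA N t) :=
      abs_of_pos (sub_pos.mpr (hu' t).1)
    have e2 : |u t - x (idxB N t)| = x (idxB N t) - u t := by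
      rw [abs_of_neg (sub_neg.mpr (hu' t).2), neg_sub]
    rw [e1, e2, hrest_def]
    ring
  have hc0' : 0 < 4/κ := by positivity
  have hcneg : -(4/κ) ≤ 0 := by linarith
  have hsplit : ∀ t, rest t = Finset.Iio (idxA N t) ∪ Finset.Ioi (idxB N t) := by
    intro t
    ext j
    simp [hrest_def, Finset.mem_erase, Finset.mem_univ, and_true, Finset.mem_union,
      Finset.mem_Iio, Finset.mem_Ioi, Fin.lt_def, Fin.ext_iff, idxA, idxB]
    omega
  have hdisj : ∀ t, Disjoint (Finset.Iio (idxA N t)) (Finset.Ioi (idxB N t)) := by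
    intro t
    rw [Finset.disjoint_left]
    intro j hj1 hj2
    simp [Finset.mem_Iio, Finset.mem_Ioi, Fin.lt_def, idxA, idxB] at hj1 hj2
    omega
  have hrestle : ∀ t, (∏ j ∈ rest t, |u t - x j| ^ (-(4/κ)))
      ≤ (∏ j ∈ Finset.Iio (idxA N t), (x (idxA N t) - x j) ^ (-(4/κ))) *
        (∏ j ∈ Finset.Ioi (idxB N t), (x j - x (idxB N t)) ^ (-(4/κ))) := by
    intro t
    rw [hsplit t, Finset.prod_union (hdisj t)]
    refine mul_le_mul ?_ ?_
      (Finset.prod_nonneg fun j _ => Real.rpow_nonneg (abs_nonneg _) _)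
      (Finset.prod_nonneg fun j hj => Real.rpow_nonneg ?_ _)
    · refine Finset.prod_le_prod (fun j _ => Real.rpow_nonneg (abs_nonneg _) _)
        fun j hj => ?_
      have hjlt : j < idxA N t := Finset.mem_Iio.mp hj
      have h1 : x j < x (idxA N t) := hx hjlt
      have h2 : 0 < x (idxA N t) - x j := sub_pos.mpr h1
      have h3 : x (idxA N t) - x j ≤ |u t - x j| := by
        rw [abs_of_pos (by linarith [(hu' t).1] : (0:ℝ) < u t - x j)]
        linarith [(hu' t).1]
      exact Real.rpow_le_rpow_of_nonpos h2 h3 hcneg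
    · refine Finset.prod_le_prod (fun j _ => Real.rpow_nonneg (abs_nonneg _) _)
        fun j hj => ?_
      have hjgt : idxB N t < j := Finset.mem_Ioi.mp hj
      have h1 : x (idxB N t) < x j := hx hjgt
      have h2 : 0 < x j - x (idxB N t) := sub_pos.mpr h1
      have h3 : x j - x (idxB N t) ≤ |u t - x j| := by
        rw [abs_sub_comm, abs_of_pos (by linarith [(hu' t).2] : (0:ℝ) < x j - u t)]
        linarith [(hu' t).2]
      exact Real.rpow_le_rpow_of_nonpos h2 h3 hcneg
    · have hjlt : j < idxA N t := Finset.mem_Iio.mp hj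
      have h1 : x j < x (idxA N t) := hx hjlt
      linarith
  have key : ∀ t, (∏ j : Fin (2*N), |u t - x j| ^ (-(4/κ)))
      ≤ (hfun (x (idxA N t)) (x (idxB N t)) (4/κ) (u t)) *
        ((∏ j ∈ Finset.Iio (idxA N t), (x (idxA N t) - x j) ^ (-(4/κ))) *
         (∏ j ∈ Finset.Ioi (idxB N t), (x j - x (idxB N t)) ^ (-(4/κ)))) := by
    intro t
    rw [hdec t]
    refine mul_le_mul (hfun_ge (hab t) hc0' (hu' t)) (hrestle t)
      (Finset.prod_nonneg fun j _ => Real.rpow_nonneg (abs_nonneg _) _)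
      (hfun_nonneg (hab t) _ (hu' t))
  have hT3 : (∏ t : Fin N, ∏ j : Fin (2*N), |u t - x j| ^ (-(4/κ)))
      ≤ ((∏ i : Fin (2*N), ∏ j ∈ Finset.Ioi i,
            (if j.1 % 2 = 0 then (x j - x i) ^ (-(4/κ)) else 1)) *
         (∏ i : Fin (2*N), ∏ j ∈ Finset.Ioi i,
            (if i.1 % 2 = 1 then (x j - x i) ^ (-(4/κ)) else 1))) *
        ∏ t : Fin N, hfun (x (idxA N t)) (x (idxB N t)) (4/κ) (u t) := by
    calc (∏ t : Fin N, ∏ j : Fin (2*N), |u t - x j| ^ (-(4/κ)))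
        ≤ ∏ t : Fin N, ((hfun (x (idxA N t)) (x (idxB N t)) (4/κ) (u t)) *
            ((∏ j ∈ Finset.Iio (idxA N t), (x (idxA N t) - x j) ^ (-(4/κ))) *
             (∏ j ∈ Finset.Ioi (idxB N t), (x j - x (idxB N t)) ^ (-(4/κ))))) :=
          Finset.prod_le_prod
            (fun t _ => Finset.prod_nonneg fun j _ => Real.rpow_nonneg (abs_nonneg _) _)
            (fun t _ => key t)
      _ = (∏ t : Fin N, hfun (x (idxA N t)) (x (idxB N t)) (4/κ) (u t)) *
            ((∏ t : Fin N, ∏ j ∈ Finset.Iio (idxA N t), (x (idxA N t) - x j) ^ (-(4/κ))) *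
             (∏ t : Fin N, ∏ j ∈ Finset.Ioi (idxB N t), (x j - x (idxB N t)) ^ (-(4/κ)))) := by
          rw [Finset.prod_mul_distrib, Finset.prod_mul_distrib]
      _ = ((∏ i : Fin (2*N), ∏ j ∈ Finset.Ioi i,
              (if j.1 % 2 = 0 then (x j - x i) ^ (-(4/κ)) else 1)) *
           (∏ i : Fin (2*N), ∏ j ∈ Finset.Ioi i,
              (if i.1 % 2 = 1 then (x j - x i) ^ (-(4/κ)) else 1))) *
          ∏ t : Fin N, hfun (x (idxA N t)) (x (idxB N t)) (4/κ) (u t) := by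
          rw [reindex_even (fun i j => (x j - x i) ^ (-(4/κ))),
            reindex_odd (fun i j => (x j - x i) ^ (-(4/κ)))]
          ring
  -- nonnegativity facts
  have hT1nn : 0 ≤ ∏ i : Fin (2*N), ∏ j ∈ Finset.Ioi i, (x j - x i) ^ (2/κ) :=
    Finset.prod_nonneg fun i _ => Finset.prod_nonneg fun j hj =>
      Real.rpow_nonneg (sub_nonneg.mpr (hx (Finset.mem_Ioi.mp hj)).le) _
  have hQvalnn : 0 ≤ ∏ r : Fin N, ∏ s ∈ Finset.Ioi r,
      (x (idxB N s) - x (idxA N r)) ^ (8/κ) :=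
    Finset.prod_nonneg fun r _ => Finset.prod_nonneg fun s hs => by
      have hrs : r < s := Finset.mem_Ioi.mp hs
      have : x (idxA N r) < x (idxB N s) := hx (by simp [idxA, idxB, Fin.lt_def]; omega)
      exact Real.rpow_nonneg (by linarith) _
  have hT3nn : 0 ≤ ∏ t : Fin N, ∏ j : Fin (2*N), |u t - x j| ^ (-(4/κ)) :=
    Finset.prod_nonneg fun t _ => Finset.prod_nonneg fun j _ =>
      Real.rpow_nonneg (abs_nonneg _) _
  calc cgIntegrand κ N x u
      = (∏ i : Fin (2*N), ∏ j ∈ Finset.Ioi i, (x j - x i) ^ (2/κ)) *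
        (∏ r : Fin N, ∏ s ∈ Finset.Ioi r, |u s - u r| ^ (8/κ)) *
        (∏ t : Fin N, ∏ j : Fin (2*N), |u t - x j| ^ (-(4/κ))) := rfl
    _ ≤ (∏ i : Fin (2*N), ∏ j ∈ Finset.Ioi i, (x j - x i) ^ (2/κ)) *
        (∏ r : Fin N, ∏ s ∈ Finset.Ioi r, (x (idxB N s) - x (idxA N r)) ^ (8/κ)) *
        (∏ t : Fin N, ∏ j : Fin (2*N), |u t - x j| ^ (-(4/κ))) :=
      mul_le_mul_of_nonneg_right (mul_le_mul_of_nonneg_left hT2 hT1nn) hT3nn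
    _ ≤ (∏ i : Fin (2*N), ∏ j ∈ Finset.Ioi i, (x j - x i) ^ (2/κ)) *
        (∏ r : Fin N, ∏ s ∈ Finset.Ioi r, (x (idxB N s) - x (idxA N r)) ^ (8/κ)) *
        (((∏ i : Fin (2*N), ∏ j ∈ Finset.Ioi i,
            (if j.1 % 2 = 0 then (x j - x i) ^ (-(4/κ)) else 1)) *
          (∏ i : Fin (2*N), ∏ j ∈ Finset.Ioi i,
            (if i.1 % 2 = 1 then (x j - x i) ^ (-(4/κ)) else 1))) *
         ∏ t : Fin N, hfun (x (idxA N t)) (x (idxB N t)) (4/κ) (u t)) :=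
      mul_le_mul_of_nonneg_left hT3 (mul_nonneg hT1nn hQvalnn)
    _ = (∏ i : Fin (2*N), ∏ j ∈ Finset.Ioi i, (x j - x i) ^ (eexp κ i.1 j.1)) *
        ∏ t : Fin N, hfun (x (idxA N t)) (x (idxB N t)) (4/κ) (u t) := by
      rw [hW, hQ]
      ring

lemma W_mul_R {κ : ℝ} {N : ℕ} {x : Fin (2*N) → ℝ} (hx : StrictMono x) :
    (∏ i : Fin (2*N), ∏ j ∈ Finset.Ioi i, (x j - x i) ^ (eexp κ i.1 j.1)) *
      (∏ t : Fin N, (x (idxB N t) - x (idxA N t)) ^ (1 - 2*(4/κ)))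
    = ∏ i : Fin (2*N), ∏ j ∈ Finset.Ioi i, (x j - x i) ^ (Eexp κ i.1 j.1) := by
  rw [← reindex_adj (fun i j => (x j - x i) ^ (1 - 2*(4/κ))), ← Finset.prod_mul_distrib]
  refine Finset.prod_congr rfl fun i _ => ?_
  rw [← Finset.prod_mul_distrib]
  refine Finset.prod_congr rfl fun j hj => ?_
  have hb : 0 < x j - x i := sub_pos.mpr (hx (Finset.mem_Ioi.mp hj))
  rw [Eexp, Real.rpow_add hb, rpow_ite]

lemma compare {κ : ℝ} (hκ4 : 4 < κ) (hκ8 : κ < 8) {N : ℕ} {x : Fin (2*N) → ℝ}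
    (hx : StrictMono x) :
    (∏ i : Fin (2*N), ∏ j ∈ Finset.Ioi i, (x j - x i) ^ (Eexp κ i.1 j.1))
    ≤ ∏ i : Fin (2*N), ∏ j ∈ Finset.Ioi i,
        |x j - x i| ^ (if 1 ≤ |x j - x i| then 10/κ else -(6/κ)) := by
  refine Finset.prod_le_prod
    (fun i _ => Finset.prod_nonneg fun j hj =>
      Real.rpow_nonneg (sub_nonneg.mpr (hx (Finset.mem_Ioi.mp hj)).le) _)
    (fun i _ => Finset.prod_le_prod
      (fun j hj => Real.rpow_nonneg
        (sub_nonneg.mpr (hx (Finset.mem_Ioi.mp hj)).le) _)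
      fun j hj => ?_)
  have hb : 0 < x j - x i := sub_pos.mpr (hx (Finset.mem_Ioi.mp hj))
  have hij : i.1 < j.1 := Fin.lt_def.mp (Finset.mem_Ioi.mp hj)
  obtain ⟨hE1, hE2⟩ := Eexp_bounds hκ4 hκ8 hij
  rw [abs_of_pos hb]
  split_ifs with h1
  · exact Real.rpow_le_rpow_of_exponent_le h1 hE2
  · exact Real.rpow_le_rpow_of_exponent_ge hb (le_of_not_ge h1) hE1

lemma cg_measurable (κ : ℝ) (N : ℕ) (x : Fin (2*N) → ℝ) :
    Measurable (cgIntegrand κ N x) := by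
  unfold cgIntegrand
  refine Measurable.mul (Measurable.mul measurable_const ?_) ?_
  · exact Finset.measurable_prod _ fun r _ => Finset.measurable_prod _ fun s _ =>
      (measurable_rpow_const' _).comp
        (((measurable_pi_apply s).sub (measurable_pi_apply r)).abs)
  · exact Finset.measurable_prod _ fun t _ => Finset.measurable_prod _ fun j _ =>
      (measurable_rpow_const' _).comp
        (((measurable_pi_apply t).sub measurable_const).abs)

lemma cg_nonneg {κ : ℝ} {N : ℕ} {x : Fin (2*N) → ℝ} (hx : StrictMono x)
    (u : Fin N → ℝ) : 0 ≤ cgIntegrand κ N x u := by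
  unfold cgIntegrand
  refine mul_nonneg (mul_nonneg ?_ ?_) ?_
  · exact Finset.prod_nonneg fun i _ => Finset.prod_nonneg fun j hj =>
      Real.rpow_nonneg (sub_nonneg.mpr (hx (Finset.mem_Ioi.mp hj)).le) _
  · exact Finset.prod_nonneg fun r _ => Finset.prod_nonneg fun s _ =>
      Real.rpow_nonneg (abs_nonneg _) _
  · exact Finset.prod_nonneg fun t _ => Finset.prod_nonneg fun j _ =>
      Real.rpow_nonneg (abs_nonneg _) _

lemma cg_pos {κ : ℝ} {N : ℕ} {x : Fin (2*N) → ℝ} (hx : StrictMono x)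
    {u : Fin N → ℝ} (hu : u ∈ cgBox N x) : 0 < cgIntegrand κ N x u := by
  have hu' : ∀ t, u t ∈ Set.Ioo (x (idxA N t)) (x (idxB N t)) := fun t => hu t
  unfold cgIntegrand
  refine mul_pos (mul_pos ?_ ?_) ?_
  · exact Finset.prod_pos fun i _ => Finset.prod_pos fun j hj =>
      Real.rpow_pos_of_pos (sub_pos.mpr (hx (Finset.mem_Ioi.mp hj))) _
  · refine Finset.prod_pos fun r _ => Finset.prod_pos fun s hs => ?_
    have hrs : r < s := Finset.mem_Ioi.mp hs
    have hba : x (idxB N r) ≤ x (idxA N s) := by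
      apply hx.monotone
      simp only [idxA, idxB, Fin.le_def]
      omega
    have huru : u r < u s := lt_of_lt_of_le (hu' r).2 (le_trans hba (hu' s).1.le)
    exact Real.rpow_pos_of_pos (abs_pos.mpr (sub_ne_zero.mpr (ne_of_gt huru))) _
  · refine Finset.prod_pos fun t _ => Finset.prod_pos fun j _ => ?_
    rcases le_or_gt j.1 (2*t.1) with hcase | hcase
    · have : x j ≤ x (idxA N t) := by
        apply hx.monotone
        simp only [idxA, Fin.le_def]
        omega
      have : x j < u t := lt_of_le_of_lt this (hu' t).1
      exact Real.rpow_pos_of_pos (abs_pos.mpr (sub_ne_zero.mpr (ne_of_gt this))) _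
    · have : x (idxB N t) ≤ x j := by
        apply hx.monotone
        simp only [idxB, Fin.le_def]
        omega
      have : u t < x j := lt_of_lt_of_le (hu' t).2 this
      exact Real.rpow_pos_of_pos (abs_pos.mpr (sub_ne_zero.mpr (ne_of_lt this))) _

end CGaux

/-- refined power-law bound for the Coulomb gas iterated integral:
for `κ ∈ (4,8)` and `N ≥ 1` there is a constant `C > 0` such that for all
`x₁ < ⋯ < x_{2N}` the integral is finite, strictly positive, and bounded by
`C·∏_{i<j}|x_j−x_i|^{μ_{ij}}` with `μ_{ij} = 10/κ` if `|x_j−x_i| ≥ 1` and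
`μ_{ij} = −6/κ` otherwise. -/
theorem statement7 (κ : ℝ) (hκ : κ ∈ Set.Ioo (4:ℝ) 8) (N : ℕ) (hN : 1 ≤ N) :
    ∃ C : ℝ, 0 < C ∧ ∀ x : Fin (2*N) → ℝ, StrictMono x →
      IntegrableOn (cgIntegrand κ N x) (cgBox N x) volume ∧
      0 < (∫ u in cgBox N x, cgIntegrand κ N x u) ∧
      (∫ u in cgBox N x, cgIntegrand κ N x u) ≤
        C * ∏ i : Fin (2*N), ∏ j ∈ Finset.Ioi i,
          |x j - x i| ^ (if 1 ≤ |x j - x i| then 10/κ else -(6/κ)) := by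
  obtain ⟨hκ4, hκ8⟩ := hκ
  have hκ0 : (0:ℝ) < κ := by linarith
  have hc0 : (0:ℝ) < 4/κ := by positivity
  have hc1 : 4/κ < 1 := (div_lt_one hκ0).mpr (by linarith)
  have hc1pos : (0:ℝ) < 2 ^ (4/κ) * 2 / (1 - 4/κ) := by
    apply div_pos
    · have := Real.rpow_pos_of_pos (by norm_num : (0:ℝ) < 2) (4/κ)
      linarith
    · linarith
  refine ⟨(2 ^ (4/κ) * 2 / (1 - 4/κ)) ^ N, pow_pos hc1pos N, fun x hx => ?_⟩
  have hab : ∀ t : Fin N, x (CGaux.idxA N t) < x (CGaux.idxB N t) := fun t =>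
    hx (by simp [CGaux.idxA, CGaux.idxB, Fin.lt_def])
  have hboxeq : cgBox N x
      = Set.pi Set.univ (fun t => Set.Ioo (x (CGaux.idxA N t)) (x (CGaux.idxB N t))) := by
    ext u
    simp only [cgBox, Set.mem_setOf_eq, Set.mem_pi, Set.mem_univ, forall_true_left]
    exact ⟨fun h r => h r, fun h r => h r⟩
  have hboxm : MeasurableSet (cgBox N x) := by
    rw [hboxeq]; exact MeasurableSet.univ_pi fun t => measurableSet_Ioo
  set W := ∏ i : Fin (2*N), ∏ j ∈ Finset.Ioi i, (x j - x i) ^ (CGaux.eexp κ i.1 j.1)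
    with hWdef
  have hWnn : 0 ≤ W := Finset.prod_nonneg fun i _ => Finset.prod_nonneg fun j hj =>
    Real.rpow_nonneg (sub_nonneg.mpr (hx (Finset.mem_Ioi.mp hj)).le) _
  set Hf : Fin N → ℝ → ℝ := fun t =>
    (Set.Ioo (x (CGaux.idxA N t)) (x (CGaux.idxB N t))).indicator
      (CGaux.hfun (x (CGaux.idxA N t)) (x (CGaux.idxB N t)) (4/κ)) with hHdef
  have hHint : ∀ t, Integrable (Hf t) := fun t =>
    (integrable_indicator_iff measurableSet_Ioo).mpr
      (CGaux.hfun_integrableOn (hab t) hc1)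
  have hHnn : ∀ t v, 0 ≤ Hf t v := fun t v =>
    Set.indicator_nonneg (fun w hw => CGaux.hfun_nonneg (hab t) w hw) v
  have hG : Integrable (fun u : Fin N → ℝ => W * ∏ t, Hf t (u t)) :=
    (Integrable.fintype_prod (f := Hf) hHint).const_mul W
  have hbound : ∀ u ∈ cgBox N x, cgIntegrand κ N x u ≤ W * ∏ t, Hf t (u t) := by
    intro u hu
    refine (CGaux.pointwise_bound hκ0 hx hu).trans (le_of_eq ?_)
    refine congrArg (W * ·) (Finset.prod_congr rfl fun t _ => ?_)
    exact (Set.indicator_of_mem (hu t) _).symm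
  have hintOn : IntegrableOn (cgIntegrand κ N x) (cgBox N x) volume := by
    refine Integrable.mono' hG.integrableOn
      (CGaux.cg_measurable κ N x).aestronglyMeasurable ?_
    refine (ae_restrict_iff' hboxm).mpr (ae_of_all _ fun u hu => ?_)
    rw [Real.norm_eq_abs, abs_of_nonneg (CGaux.cg_nonneg hx u)]
    exact hbound u hu
  refine ⟨hintOn, ?_, ?_⟩
  · rw [setIntegral_pos_iff_support_of_nonneg_ae
      (ae_of_all _ fun u => CGaux.cg_nonneg hx u) hintOn]
    refine lt_of_lt_of_le ?_
      (measure_mono (fun u hu => ⟨ne_of_gt (CGaux.cg_pos hx hu), hu⟩))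
    rw [hboxeq, volume_pi_pi]
    refine CanonicallyOrderedAdd.prod_pos.mpr fun t _ => ?_
    rw [Real.volume_Ioo]
    exact ENNReal.ofReal_pos.mpr (by linarith [hab t])
  · have step1 : (∫ u in cgBox N x, cgIntegrand κ N x u)
        ≤ ∫ u in cgBox N x, W * ∏ t, Hf t (u t) :=
      setIntegral_mono_on hintOn hG.integrableOn hboxm hbound
    have step2 : (∫ u in cgBox N x, W * ∏ t, Hf t (u t))
        ≤ ∫ u : Fin N → ℝ, W * ∏ t, Hf t (u t) :=
      setIntegral_le_integral hG (ae_of_all _ fun u =>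
        mul_nonneg hWnn (Finset.prod_nonneg fun t _ => hHnn t (u t)))
    have step3 : (∫ u : Fin N → ℝ, W * ∏ t, Hf t (u t)) = W * ∏ t, ∫ v, Hf t v := by
      rw [MeasureTheory.integral_const_mul,
        MeasureTheory.integral_fintype_prod_volume_eq_prod (f := Hf)]
    have step4 : ∀ t, (∫ v, Hf t v) = (2 ^ (4/κ) * 2 / (1 - 4/κ)) *
        (x (CGaux.idxB N t) - x (CGaux.idxA N t)) ^ (1 - 2*(4/κ)) := by
      intro t
      rw [hHdef]
      simp only
      rw [MeasureTheory.integral_indicator measurableSet_Ioo]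
      exact CGaux.hfun_integral (hab t) hc0 hc1
    calc (∫ u in cgBox N x, cgIntegrand κ N x u)
        ≤ W * ∏ t, ∫ v, Hf t v := step1.trans (step2.trans_eq step3)
      _ = (2 ^ (4/κ) * 2 / (1 - 4/κ)) ^ N *
          (W * ∏ t : Fin N, (x (CGaux.idxB N t) - x (CGaux.idxA N t)) ^ (1 - 2*(4/κ))) := by
          rw [Finset.prod_congr rfl fun t _ => step4 t, Finset.prod_mul_distrib,
            Finset.prod_const, Finset.card_univ, Fintype.card_fin]
          ring
      _ = (2 ^ (4/κ) * 2 / (1 - 4/κ)) ^ N *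
          ∏ i : Fin (2*N), ∏ j ∈ Finset.Ioi i, (x j - x i) ^ (CGaux.Eexp κ i.1 j.1) := by
          rw [hWdef, CGaux.W_mul_R hx]
      _ ≤ (2 ^ (4/κ) * 2 / (1 - 4/κ)) ^ N *
          ∏ i : Fin (2*N), ∏ j ∈ Finset.Ioi i,
            |x j - x i| ^ (if 1 ≤ |x j - x i| then 10/κ else -(6/κ)) :=
          mul_le_mul_of_nonneg_left (CGaux.compare hκ4 hκ8 hx)
            (le_of_lt (pow_pos hc1pos N))
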